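/- Let f(z) = ∑_{n≥0} a_n z^n be a power series, R > 0, and ε ∈ (0,1). Define the fractional derivative δ^ε f(z) = ∑_{n≥1} n^ε a_n z^n and its norm ‖δ^ε f(R)‖ = ∑_{n≥1} n^ε |a_n| R^n. If ‖δ^ε f(R)‖ < ∞, then for every complex z with |z| ≤ R one has |f(z) − f(R)| ≤ 2^{1−ε} · ‖δ^ε f(R)‖ · |1 − z/R|^ε. -/
import Mathlib

lemma key_bound (R ε : ℝ) (hR : 0 < R) (hε : ε ∈ Set.Ioo (0 : ℝ) 1) (z : ℂ) (hz : ‖z‖ ≤ R)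
    (n : ℕ) :
    ‖z ^ n - (R : ℂ) ^ n‖ ≤ (2 : ℝ) ^ (1 - ε) * (n : ℝ) ^ ε * R ^ n * ‖1 - z / (R : ℂ)‖ ^ ε := by
  obtain ⟨hε0, hε1⟩ := hε
  set t : ℝ := ‖1 - z / (R : ℂ)‖ with ht
  have ht0 : 0 ≤ t := norm_nonneg _
  have hRC : (R : ℂ) ≠ 0 := by exact_mod_cast hR.ne'
  have hRnorm : ‖(R : ℂ)‖ = R := by
    rw [Complex.norm_real, Real.norm_eq_abs, abs_of_pos hR]
  have hzR : ‖z - (R : ℂ)‖ = R * t := by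
    have h : z - (R : ℂ) = -(R : ℂ) * (1 - z / (R : ℂ)) := by field_simp; ring
    rw [h, norm_mul, norm_neg, hRnorm]
  rcases Nat.eq_zero_or_pos n with hn | hn
  · subst hn; simp [Real.zero_rpow hε0.ne']
  have h1 : ‖z ^ n - (R : ℂ) ^ n‖ ≤ 2 * R ^ n := by
    have hzn : ‖z ^ n‖ ≤ R ^ n := by
      rw [norm_pow]; exact pow_le_pow_left₀ (norm_nonneg z) hz n
    have hrn : ‖(R : ℂ) ^ n‖ = R ^ n := by rw [norm_pow, hRnorm]
    calc ‖z ^ n - (R : ℂ) ^ n‖ ≤ ‖z ^ n‖ + ‖(R : ℂ) ^ n‖ := norm_sub_le _ _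
      _ ≤ R ^ n + R ^ n := by rw [hrn]; exact add_le_add hzn le_rfl
      _ = 2 * R ^ n := by ring
  have h2 : ‖z ^ n - (R : ℂ) ^ n‖ ≤ (n : ℝ) * R ^ n * t := by
    have hg : z ^ n - (R : ℂ) ^ n =
        (∑ i ∈ Finset.range n, z ^ i * (R : ℂ) ^ (n - 1 - i)) * (z - (R : ℂ)) :=
      (geom_sum₂_mul z (R : ℂ) n).symm
    rw [hg, norm_mul, hzR]
    have hsum : ‖∑ i ∈ Finset.range n, z ^ i * (R : ℂ) ^ (n - 1 - i)‖ ≤ (n : ℝ) * R ^ (n - 1) := by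
      calc ‖∑ i ∈ Finset.range n, z ^ i * (R : ℂ) ^ (n - 1 - i)‖
          ≤ ∑ i ∈ Finset.range n, ‖z ^ i * (R : ℂ) ^ (n - 1 - i)‖ := norm_sum_le _ _
        _ ≤ ∑ _i ∈ Finset.range n, R ^ (n - 1) := by
            apply Finset.sum_le_sum
            intro i hi
            have hi' : i < n := Finset.mem_range.mp hi
            rw [norm_mul, norm_pow, norm_pow, hRnorm]
            calc ‖z‖ ^ i * R ^ (n - 1 - i) ≤ R ^ i * R ^ (n - 1 - i) :=
                mul_le_mul_of_nonneg_right (pow_le_pow_left₀ (norm_nonneg z) hz i)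
                  (by positivity)
              _ = R ^ (n - 1) := by rw [← pow_add]; congr 1; omega
        _ = (n : ℝ) * R ^ (n - 1) := by
            rw [Finset.sum_const, Finset.card_range, nsmul_eq_mul]
    calc ‖∑ i ∈ Finset.range n, z ^ i * (R : ℂ) ^ (n - 1 - i)‖ * (R * t)
        ≤ ((n : ℝ) * R ^ (n - 1)) * (R * t) :=
          mul_le_mul_of_nonneg_right hsum (by positivity)
      _ = (n : ℝ) * R ^ n * t := by
          rw [show R ^ n = R ^ (n - 1) * R by rw [← pow_succ]; congr 1; omega]; ring
  have hm0 : (0 : ℝ) ≤ ‖z ^ n - (R : ℂ) ^ n‖ := norm_nonneg _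
  set m := ‖z ^ n - (R : ℂ) ^ n‖ with hmdef
  have hcomb : m ≤ ((n : ℝ) * R ^ n * t) ^ ε * (2 * R ^ n) ^ (1 - ε) := by
    rcases hm0.eq_or_lt with h | h
    · rw [← h]; positivity
    · have hsplit : m = m ^ ε * m ^ (1 - ε) := by
        rw [← Real.rpow_add h, add_sub_cancel, Real.rpow_one]
      rw [hsplit]
      exact mul_le_mul (Real.rpow_le_rpow hm0 h2 hε0.le)
        (Real.rpow_le_rpow hm0 h1 (by linarith)) (Real.rpow_nonneg hm0 _)
        (Real.rpow_nonneg (by positivity) _)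
  refine hcomb.trans_eq ?_
  have hRn : (0 : ℝ) < R ^ n := pow_pos hR n
  rw [Real.mul_rpow (by positivity) ht0, Real.mul_rpow (n.cast_nonneg) hRn.le,
    Real.mul_rpow (by norm_num) hRn.le]
  have hRR : ((R : ℝ) ^ n) ^ ε * ((R : ℝ) ^ n) ^ (1 - ε) = R ^ n := by
    rw [← Real.rpow_add hRn, add_sub_cancel, Real.rpow_one]
  calc (n : ℝ) ^ ε * (R ^ n) ^ ε * t ^ ε * ((2:ℝ) ^ (1 - ε) * (R ^ n) ^ (1 - ε))
      = (2:ℝ) ^ (1 - ε) * (n : ℝ) ^ ε * ((R ^ n) ^ ε * (R ^ n) ^ (1 - ε)) * t ^ ε := by ring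
    _ = (2:ℝ) ^ (1 - ε) * (n : ℝ) ^ ε * R ^ n * t ^ ε := by rw [hRR]

/-- Fractional derivative bound: `|f(z) - f(R)| ≤ 2^{1-ε} ‖δ^ε f(R)‖ |1 - z/R|^ε`. -/
theorem stmt_1 (a : ℕ → ℂ) (R ε : ℝ) (hR : 0 < R) (hε : ε ∈ Set.Ioo (0 : ℝ) 1)
    (hsum : Summable fun n : ℕ => (n : ℝ) ^ ε * ‖a n‖ * R ^ n) :
    ∀ z : ℂ, ‖z‖ ≤ R →
      ‖(∑' n : ℕ, a n * z ^ n) - ∑' n : ℕ, a n * (R : ℂ) ^ n‖ ≤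
        (2 : ℝ) ^ (1 - ε) * (∑' n : ℕ, (n : ℝ) ^ ε * ‖a n‖ * R ^ n) * ‖1 - z / (R : ℂ)‖ ^ ε := by
  intro z hz
  obtain ⟨hε0, hε1⟩ := hε
  set t : ℝ := ‖1 - z / (R : ℂ)‖ with ht
  have ht0 : 0 ≤ t := norm_nonneg _
  have hRnorm : ‖(R : ℂ)‖ = R := by
    rw [Complex.norm_real, Real.norm_eq_abs, abs_of_pos hR]
  -- summability of ‖a n‖ R^n
  have hS : Summable fun n : ℕ => ‖a n‖ * R ^ n := by
    rw [← summable_nat_add_iff 1]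
    refine Summable.of_nonneg_of_le (fun n => by positivity) (fun n => ?_)
      ((summable_nat_add_iff 1).mpr hsum)
    have h1 : (1 : ℝ) ≤ ((n + 1 : ℕ) : ℝ) ^ ε := by
      apply Real.one_le_rpow (by exact_mod_cast Nat.one_le_iff_ne_zero.mpr (Nat.succ_ne_zero n))
        hε0.le
    nlinarith [norm_nonneg (a (n + 1)), pow_pos hR (n + 1), mul_nonneg (norm_nonneg (a (n+1))) (pow_pos hR (n+1)).le]
  have hzsum : Summable fun n : ℕ => a n * z ^ n := by
    apply Summable.of_norm
    apply hS.of_nonneg_of_le (fun n => norm_nonneg _)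
    intro n
    rw [norm_mul, norm_pow]
    exact mul_le_mul_of_nonneg_left (pow_le_pow_left₀ (norm_nonneg z) hz n) (norm_nonneg _)
  have hrsum : Summable fun n : ℕ => a n * (R : ℂ) ^ n := by
    apply Summable.of_norm
    apply hS.of_nonneg_of_le (fun n => norm_nonneg _)
    intro n
    rw [norm_mul, norm_pow, hRnorm]
  rw [← Summable.tsum_sub hzsum hrsum]
  have hgsum : HasSum (fun n : ℕ => ((2 : ℝ) ^ (1 - ε) * t ^ ε) * ((n : ℝ) ^ ε * ‖a n‖ * R ^ n))
      (((2 : ℝ) ^ (1 - ε) * t ^ ε) * ∑' n : ℕ, (n : ℝ) ^ ε * ‖a n‖ * R ^ n) :=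
    hsum.hasSum.mul_left _
  have hterm : ∀ n : ℕ, ‖a n * z ^ n - a n * (R : ℂ) ^ n‖ ≤
      ((2 : ℝ) ^ (1 - ε) * t ^ ε) * ((n : ℝ) ^ ε * ‖a n‖ * R ^ n) := by
    intro n
    have : a n * z ^ n - a n * (R : ℂ) ^ n = a n * (z ^ n - (R : ℂ) ^ n) := by ring
    rw [this, norm_mul]
    calc ‖a n‖ * ‖z ^ n - (R : ℂ) ^ n‖
        ≤ ‖a n‖ * ((2 : ℝ) ^ (1 - ε) * (n : ℝ) ^ ε * R ^ n * t ^ ε) :=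
          mul_le_mul_of_nonneg_left (key_bound R ε hR ⟨hε0, hε1⟩ z hz n) (norm_nonneg _)
      _ = (2 : ℝ) ^ (1 - ε) * t ^ ε * ((n : ℝ) ^ ε * ‖a n‖ * R ^ n) := by ring
  calc ‖∑' n : ℕ, (a n * z ^ n - a n * (R : ℂ) ^ n)‖
      ≤ ((2 : ℝ) ^ (1 - ε) * t ^ ε) * ∑' n : ℕ, (n : ℝ) ^ ε * ‖a n‖ * R ^ n :=
        tsum_of_norm_bounded hgsum hterm
    _ = (2 : ℝ) ^ (1 - ε) * (∑' n : ℕ, (n : ℝ) ^ ε * ‖a n‖ * R ^ n) * t ^ ε := by ring
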